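/- Let p ≥ 2 and λ ≥ 0. Then for every s, t ∈ ℝ one has (J_λ(s) − J_λ(t))·(s − t) ≥ (4/p²)·|H_λ(s) − H_λ(t)|². -/

import Mathlib

open Real

/-- `J_λ(s) = (|s| − λ)₊^{p−1} · s/|s|` for `s ≠ 0`, and `J_λ(0) = 0`. -/
noncomputable def Jfun (p lam s : ℝ) : ℝ :=
  if s = 0 then 0 else (max (|s| - lam) 0) ^ (p - 1) * (s / |s|)

/-- `H_λ(s) = (|s| − λ)₊^{p/2} · s/|s|` for `s ≠ 0`, and `H_λ(0) = 0`. -/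
noncomputable def Hfun (p lam s : ℝ) : ℝ :=
  if s = 0 then 0 else (max (|s| - lam) 0) ^ (p / 2) * (s / |s|)

noncomputable def gfun (q x : ℝ) : ℝ := |x| ^ q * (x / |x|)

lemma gfun_zero (q : ℝ) : gfun q 0 = 0 := by simp [gfun]

lemma gfun_nonneg (q x : ℝ) (hq : 0 < q) (hx : 0 ≤ x) : gfun q x = x ^ q := by
  rcases eq_or_lt_of_le hx with h | h
  · simp [← h, gfun, Real.zero_rpow hq.ne']
  · rw [gfun, abs_of_pos h, div_self h.ne', mul_one]

lemma gfun_neg (q x : ℝ) : gfun q (-x) = - gfun q x := by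
  rcases eq_or_ne x 0 with rfl | h
  · simp [gfun]
  · rw [gfun, gfun, abs_neg, neg_div, mul_neg]

lemma rpow_concave_bound (A B r : ℝ) (hA : 0 < A) (hB : 0 ≤ B)
    (hr0 : 0 < r) (hr1 : r ≤ 1) :
    r * A ^ (r - 1) * (A - B) ≤ A ^ r - B ^ r := by
  have e1 : (A ^ r) ^ (1 - r) * (A ^ (r - 1) * B) ^ r = B ^ r := by
    rw [Real.mul_rpow (Real.rpow_nonneg hA.le (r-1)) hB, ← Real.rpow_mul hA.le,
      ← Real.rpow_mul hA.le, ← mul_assoc, ← Real.rpow_add hA,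
      show r * (1 - r) + (r - 1) * r = (0:ℝ) by ring, Real.rpow_zero, one_mul]
  have h := Real.geom_mean_le_arith_mean2_weighted (by linarith : (0:ℝ) ≤ 1 - r)
    hr0.le (Real.rpow_nonneg hA.le r)
    (mul_nonneg (Real.rpow_nonneg hA.le (r-1)) hB) (by ring)
  rw [e1] at h
  have hAr : A ^ (r - 1) * A = A ^ r := by
    rw [← Real.rpow_add_one hA.ne' (r - 1)]
    congr 1; ring
  nlinarith [h, hAr]

lemma key_r (A B r : ℝ) (hB : 0 ≤ B) (hAB : B ≤ A) (hr0 : 0 < r) (hr1 : r ≤ 1) :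
    r * (A - B) ^ 2 ≤ (A ^ (2 - r) - B ^ (2 - r)) * (A ^ r - B ^ r) := by
  rcases eq_or_lt_of_le (hB.trans hAB) with h | hA
  · have hA0 : A = 0 := h.symm
    have hB0 : B = 0 := le_antisymm (hA0 ▸ hAB) hB
    simp [hA0, hB0]
  · have F1 : r * A ^ (r - 1) * (A - B) ≤ A ^ r - B ^ r :=
      rpow_concave_bound A B r hA hB hr0 hr1
    have F2 : A ^ (1 - r) * (A - B) ≤ A ^ (2 - r) - B ^ (2 - r) := by
      have h1 : A ^ (1 - r) * A = A ^ (2 - r) := by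
        rw [show (2:ℝ) - r = (1 - r) + 1 by ring, Real.rpow_add_one hA.ne']
      have h2 : B ^ (2 - r) ≤ A ^ (1 - r) * B := by
        rcases eq_or_lt_of_le hB with h0 | hBpos
        · rw [← h0, Real.zero_rpow (by linarith : (2:ℝ) - r ≠ 0)]
          simp
        · have hb1 : B ^ (2 - r) = B ^ (1 - r) * B := by
            rw [show (2:ℝ) - r = (1 - r) + 1 by ring, Real.rpow_add_one hBpos.ne']
          rw [hb1]
          exact mul_le_mul_of_nonneg_right
            (Real.rpow_le_rpow hB hAB (by linarith)) hB
      nlinarith [h1, h2]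
    have hprod : A ^ (1 - r) * A ^ (r - 1) = 1 := by
      rw [← Real.rpow_add hA]; norm_num
    have hAB2 : 0 ≤ A - B := by linarith
    have l1 : 0 ≤ r * A ^ (r - 1) * (A - B) :=
      mul_nonneg (mul_nonneg hr0.le (Real.rpow_nonneg hA.le _)) hAB2
    have l2 : 0 ≤ A ^ (1 - r) * (A - B) :=
      mul_nonneg (Real.rpow_nonneg hA.le _) hAB2
    calc r * (A - B) ^ 2
        = (A ^ (1 - r) * (A - B)) * (r * A ^ (r - 1) * (A - B)) := by
          rw [show (A ^ (1 - r) * (A - B)) * (r * A ^ (r - 1) * (A - B))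
            = r * (A ^ (1 - r) * A ^ (r - 1)) * (A - B)^2 by ring, hprod]; ring
      _ ≤ (A ^ (2 - r) - B ^ (2 - r)) * (A ^ r - B ^ r) :=
          mul_le_mul F2 F1 l1 (by nlinarith [F2, l2])

lemma nonneg_case (p : ℝ) (hp : 2 ≤ p) (a b : ℝ) (hb : 0 ≤ b) (hba : b ≤ a) :
    4 / p ^ 2 * (a ^ (p/2) - b ^ (p/2)) ^ 2 ≤ (a ^ (p-1) - b ^ (p-1)) * (a - b) := by
  have hp0 : 0 < p := by linarith
  have ha : 0 ≤ a := hb.trans hba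
  set r : ℝ := 2 / p with hr
  have hr0 : 0 < r := by positivity
  have hr1 : r ≤ 1 := by rw [hr, div_le_one hp0]; linarith
  set A : ℝ := a ^ (p/2) with hA
  set B : ℝ := b ^ (p/2) with hB
  have hBA : B ≤ A := Real.rpow_le_rpow hb hba (by positivity)
  have hB0 : 0 ≤ B := Real.rpow_nonneg hb _
  have eAr : A ^ r = a := by
    rw [hA, ← Real.rpow_mul ha, show p/2 * r = 1 by rw [hr]; field_simp, Real.rpow_one]
  have eBr : B ^ r = b := by
    rw [hB, ← Real.rpow_mul hb, show p/2 * r = 1 by rw [hr]; field_simp, Real.rpow_one]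
  have eA2 : A ^ (2 - r) = a ^ (p - 1) := by
    rw [hA, ← Real.rpow_mul ha]
    congr 1
    rw [hr]; field_simp
  have eB2 : B ^ (2 - r) = b ^ (p - 1) := by
    rw [hB, ← Real.rpow_mul hb]
    congr 1
    rw [hr]; field_simp
  have key := key_r A B r hB0 hBA hr0 hr1
  rw [eAr, eBr, eA2, eB2] at key
  have hrr : 4 / p ^ 2 = r * r := by rw [hr]; field_simp; ring
  have hABsq : 0 ≤ (A - B) ^ 2 := sq_nonneg _
  calc 4 / p ^ 2 * (A - B) ^ 2 = r * (r * (A - B) ^ 2) := by rw [hrr]; ring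
    _ ≤ 1 * (r * (A - B) ^ 2) := by
        apply mul_le_mul_of_nonneg_right hr1 (by positivity)
    _ = r * (A - B) ^ 2 := one_mul _
    _ ≤ (a ^ (p-1) - b ^ (p-1)) * (a - b) := key

lemma mixed_case (p : ℝ) (hp : 2 ≤ p) (a c : ℝ) (ha : 0 ≤ a) (hc : 0 ≤ c) :
    4 / p ^ 2 * (a ^ (p/2) + c ^ (p/2)) ^ 2 ≤ (a ^ (p-1) + c ^ (p-1)) * (a + c) := by
  have hp0 : 0 < p := by linarith
  have h4 : 4 / p ^ 2 ≤ 1 := by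
    rw [div_le_one (by positivity)]; nlinarith
  have cross : 2 * (a ^ (p/2) * c ^ (p/2)) ≤ a ^ (p-1) * c + c ^ (p-1) * a := by
    set u : ℝ := a ^ ((p-1)/2) * c ^ ((1:ℝ)/2) with hu
    set v : ℝ := c ^ ((p-1)/2) * a ^ ((1:ℝ)/2) with hv
    have hu2 : u * u = a ^ (p-1) * c := by
      rw [hu, mul_mul_mul_comm, ← Real.rpow_add' ha (by norm_num; linarith),
        ← Real.rpow_add' hc (by norm_num)]
      norm_num
    have hv2 : v * v = c ^ (p-1) * a := by
      rw [hv, mul_mul_mul_comm, ← Real.rpow_add' hc (by norm_num; linarith),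
        ← Real.rpow_add' ha (by norm_num)]
      norm_num
    have huv : u * v = a ^ (p/2) * c ^ (p/2) := by
      rw [hu, hv, show a ^ ((p-1)/2) * c ^ ((1:ℝ)/2) * (c ^ ((p-1)/2) * a ^ ((1:ℝ)/2))
        = (a ^ ((p-1)/2) * a ^ ((1:ℝ)/2)) * (c ^ ((p-1)/2) * c ^ ((1:ℝ)/2)) by ring,
        ← Real.rpow_add' ha (by intro h; nlinarith [h]),
        ← Real.rpow_add' hc (by intro h; nlinarith [h])]
      congr 1 <;> ring
    nlinarith [sq_nonneg (u - v), hu2, hv2, huv]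
  have expand : (a ^ (p/2) + c ^ (p/2)) ^ 2 ≤ (a ^ (p-1) + c ^ (p-1)) * (a + c) := by
    have ea : a ^ (p/2) * a ^ (p/2) = a ^ (p-1) * a := by
      rw [← Real.rpow_add' ha (by norm_num; linarith : p/2 + p/2 ≠ 0)]
      rcases ha.eq_or_lt with h0 | h0
      · rw [← h0, Real.zero_rpow (by norm_num; linarith : p/2 + p/2 ≠ 0),
          Real.zero_rpow (sub_ne_zero.mpr (by linarith : p ≠ 1))]; ring
      · rw [← Real.rpow_add_one h0.ne' (p - 1)]; congr 1; ring
    have ec : c ^ (p/2) * c ^ (p/2) = c ^ (p-1) * c := by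
      rw [← Real.rpow_add' hc (by norm_num; linarith : p/2 + p/2 ≠ 0)]
      rcases hc.eq_or_lt with h0 | h0
      · rw [← h0, Real.zero_rpow (by norm_num; linarith : p/2 + p/2 ≠ 0),
          Real.zero_rpow (sub_ne_zero.mpr (by linarith : p ≠ 1))]; ring
      · rw [← Real.rpow_add_one h0.ne' (p - 1)]; congr 1; ring
    nlinarith [cross, ea, ec]
  have hsq : 0 ≤ (a ^ (p/2) + c ^ (p/2)) ^ 2 := sq_nonneg _
  nlinarith [expand, hsq, h4]

lemma gfun_mono (q : ℝ) (hq : 0 < q) {x y : ℝ} (hxy : y ≤ x) :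
    gfun q y ≤ gfun q x := by
  rcases le_or_gt 0 y with hy | hy
  · rw [gfun_nonneg q x hq (hy.trans hxy), gfun_nonneg q y hq hy]
    exact Real.rpow_le_rpow hy hxy hq.le
  · rcases le_or_gt x 0 with hx | hx
    · have h1 : gfun q x = -((-x) ^ q) := by
        rw [show x = -(-x) by ring, gfun_neg, gfun_nonneg q (-x) hq (by linarith)]
        simp
      have h2 : gfun q y = -((-y) ^ q) := by
        rw [show y = -(-y) by ring, gfun_neg, gfun_nonneg q (-y) hq (by linarith)]
        simp
      rw [h1, h2, neg_le_neg_iff]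
      exact Real.rpow_le_rpow (by linarith) (by linarith) hq.le
    · have h1 : gfun q x = x ^ q := gfun_nonneg q x hq hx.le
      have h2 : gfun q y = -((-y) ^ q) := by
        rw [show y = -(-y) by ring, gfun_neg, gfun_nonneg q (-y) hq (by linarith)]
        simp
      rw [h1, h2]
      have := Real.rpow_nonneg (by linarith : (0:ℝ) ≤ -y) q
      have := Real.rpow_nonneg hx.le q
      linarith

lemma signed_case (p : ℝ) (hp : 2 ≤ p) (x y : ℝ) (hxy : y ≤ x) :
    4 / p ^ 2 * (gfun (p/2) x - gfun (p/2) y) ^ 2 ≤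
      (gfun (p-1) x - gfun (p-1) y) * (x - y) := by
  have hp2 : (0:ℝ) < p / 2 := by linarith
  have hp1 : (0:ℝ) < p - 1 := by linarith
  rcases le_or_gt 0 y with hy | hy
  · rw [gfun_nonneg _ x hp2 (hy.trans hxy), gfun_nonneg _ y hp2 hy,
      gfun_nonneg _ x hp1 (hy.trans hxy), gfun_nonneg _ y hp1 hy]
    exact nonneg_case p hp x y hy hxy
  · rcases le_or_gt x 0 with hx | hx
    · have e1 : gfun (p/2) x = -((-x) ^ (p/2)) := by
        rw [show x = -(-x) by ring, gfun_neg, gfun_nonneg _ (-x) hp2 (by linarith)]; simp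
      have e2 : gfun (p/2) y = -((-y) ^ (p/2)) := by
        rw [show y = -(-y) by ring, gfun_neg, gfun_nonneg _ (-y) hp2 (by linarith)]; simp
      have e3 : gfun (p-1) x = -((-x) ^ (p-1)) := by
        rw [show x = -(-x) by ring, gfun_neg, gfun_nonneg _ (-x) hp1 (by linarith)]; simp
      have e4 : gfun (p-1) y = -((-y) ^ (p-1)) := by
        rw [show y = -(-y) by ring, gfun_neg, gfun_nonneg _ (-y) hp1 (by linarith)]; simp
      have key := nonneg_case p hp (-y) (-x) (by linarith) (by linarith)
      rw [e1, e2, e3, e4]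
      nlinarith [key]
    · have e1 : gfun (p/2) x = x ^ (p/2) := gfun_nonneg _ x hp2 hx.le
      have e2 : gfun (p/2) y = -((-y) ^ (p/2)) := by
        rw [show y = -(-y) by ring, gfun_neg, gfun_nonneg _ (-y) hp2 (by linarith)]; simp
      have e3 : gfun (p-1) x = x ^ (p-1) := gfun_nonneg _ x hp1 hx.le
      have e4 : gfun (p-1) y = -((-y) ^ (p-1)) := by
        rw [show y = -(-y) by ring, gfun_neg, gfun_nonneg _ (-y) hp1 (by linarith)]; simp
      have key := mixed_case p hp x (-y) hx.le (by linarith)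
      rw [e1, e2, e3, e4]
      nlinarith [key]

noncomputable def wfun (lam s : ℝ) : ℝ := s - max (min s lam) (-lam)

lemma wfun_mono_lip (lam : ℝ) (hlam : 0 ≤ lam) {s t : ℝ} (hts : t ≤ s) :
    wfun lam t ≤ wfun lam s ∧ wfun lam s - wfun lam t ≤ s - t := by
  simp only [wfun, min_def, max_def]
  split_ifs <;> constructor <;> linarith

lemma thresh_eq (q lam : ℝ) (hq : 0 < q) (hlam : 0 ≤ lam) (s : ℝ) :
    (if s = 0 then 0 else (max (|s| - lam) 0) ^ q * (s / |s|)) =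
      gfun q (wfun lam s) := by
  rcases lt_trichotomy s 0 with hs | hs | hs
  · rw [if_neg hs.ne, abs_of_neg hs]
    rcases le_total (-lam) s with h | h
    · have hw : wfun lam s = 0 := by
        rw [wfun, min_eq_left (by linarith), max_eq_left h]; ring
      rw [hw, gfun_zero, max_eq_right (by linarith), Real.zero_rpow hq.ne',
        zero_mul]
    · have hw : wfun lam s = s + lam := by
        rw [wfun, min_eq_left (by linarith), max_eq_right h]; ring
      have h2 : (0:ℝ) ≤ -(s + lam) := by linarith
      rw [hw, show s + lam = -(-(s+lam)) by ring, gfun_neg,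
        gfun_nonneg q _ hq h2, max_eq_left (by linarith),
        div_neg, div_self hs.ne, show -s - lam = -(s+lam) by ring]
      ring
  · rw [if_pos hs]
    have hw : wfun lam s = 0 := by
      rw [hs, wfun, min_eq_left hlam, max_eq_left (by linarith)]; ring
    rw [hw, gfun_zero]
  · rw [if_neg hs.ne', abs_of_pos hs, div_self hs.ne']
    rcases le_total s lam with h | h
    · have hw : wfun lam s = 0 := by
        rw [wfun, min_eq_left h, max_eq_left (by linarith)]; ring
      rw [hw, gfun_zero, max_eq_right (by linarith), Real.zero_rpow hq.ne',
        zero_mul]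
    · have hw : wfun lam s = s - lam := by
        rw [wfun, min_eq_right h, max_eq_left (by linarith)]
      rw [hw, gfun_nonneg q _ hq (by linarith), max_eq_left (by linarith),
        mul_one]

lemma main' (p lam : ℝ) (hp : 2 ≤ p) (hlam : 0 ≤ lam) {s t : ℝ} (hts : t ≤ s) :
    4 / p ^ 2 * (Hfun p lam s - Hfun p lam t) ^ 2 ≤
      (Jfun p lam s - Jfun p lam t) * (s - t) := by
  have hp2 : (0:ℝ) < p / 2 := by linarith
  have hp1 : (0:ℝ) < p - 1 := by linarith
  have eJs : Jfun p lam s = gfun (p-1) (wfun lam s) := thresh_eq _ _ hp1 hlam s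
  have eJt : Jfun p lam t = gfun (p-1) (wfun lam t) := thresh_eq _ _ hp1 hlam t
  have eHs : Hfun p lam s = gfun (p/2) (wfun lam s) := thresh_eq _ _ hp2 hlam s
  have eHt : Hfun p lam t = gfun (p/2) (wfun lam t) := thresh_eq _ _ hp2 hlam t
  rw [eJs, eJt, eHs, eHt]
  obtain ⟨hmono, hlip⟩ := wfun_mono_lip lam hlam hts
  have hs := signed_case p hp (wfun lam s) (wfun lam t) hmono
  have hJ : gfun (p-1) (wfun lam t) ≤ gfun (p-1) (wfun lam s) :=
    gfun_mono _ hp1 hmono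
  calc 4 / p ^ 2 * (gfun (p/2) (wfun lam s) - gfun (p/2) (wfun lam t)) ^ 2
      ≤ (gfun (p-1) (wfun lam s) - gfun (p-1) (wfun lam t)) *
          (wfun lam s - wfun lam t) := hs
    _ ≤ (gfun (p-1) (wfun lam s) - gfun (p-1) (wfun lam t)) * (s - t) :=
        mul_le_mul_of_nonneg_left hlip (by linarith)

theorem stmt0 (p lam : ℝ) (hp : 2 ≤ p) (hlam : 0 ≤ lam) (s t : ℝ) :
    (Jfun p lam s - Jfun p lam t) * (s - t) ≥
      4 / p ^ 2 * |Hfun p lam s - Hfun p lam t| ^ 2 := by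
  rw [ge_iff_le, sq_abs]
  rcases le_total t s with h | h
  · exact main' p lam hp hlam h
  · have key := main' p lam hp hlam h
    have e1 : (Jfun p lam s - Jfun p lam t) * (s - t) =
        (Jfun p lam t - Jfun p lam s) * (t - s) := by ring
    have e2 : (Hfun p lam s - Hfun p lam t) ^ 2 =
        (Hfun p lam t - Hfun p lam s) ^ 2 := by ring
    rw [e1, e2]
    exact key
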